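/- arXiv:2602.08931 — 2 statements merged into one kernel-verified Lean document; each statement's English description precedes it below -/
import Mathlib

section
/- Let θ₀ < 0 be a real number and let a ∈ (0, ∞]. Suppose θ : ℝ → ℝ is differentiable at every point of the interval [0, a), satisfies θ(0) = θ₀, and its derivative satisfies θ′(λ) ≤ −θ(λ)²/2 for every λ ∈ [0, a). Then a ≤ 2/|θ₀|. (In other words, a real-valued solution of the Raychaudhuri differential inequality with negative initial expansion cannot be defined for affine parameter beyond 2/|θ₀|; the expansion must blow up to −∞ within finite affine parameter.) -/
/-- Focusing step of Penrose's 1965 singularity theorem: a real-valued solution of the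
Raychaudhuri differential inequality `θ' ≤ -θ²/2` on `[0, a)` with negative initial
expansion `θ₀` cannot be defined beyond affine parameter `2/|θ₀|`. Here `a ∈ (0, ∞]`
is modeled as an extended real number. -/
theorem raychaudhuri_focusing_blowup (θ₀ : ℝ) (hθ₀ : θ₀ < 0) (a : EReal) (ha : 0 < a)
    (θ : ℝ → ℝ)
    (hdiff : ∀ l : ℝ, 0 ≤ l → (l : EReal) < a → DifferentiableAt ℝ θ l)
    (h0 : θ 0 = θ₀)
    (hineq : ∀ l : ℝ, 0 ≤ l → (l : EReal) < a → deriv θ l ≤ -(θ l) ^ 2 / 2) :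
    a ≤ ((2 / |θ₀| : ℝ) : EReal) := by
  by_contra hcon
  push_neg at hcon
  set c : ℝ := 2 / |θ₀| with hc
  have habs : |θ₀| = -θ₀ := abs_of_neg hθ₀
  have hcpos : 0 < c := by
    rw [hc, habs]; exact div_pos two_pos (neg_pos.2 hθ₀)
  -- every point of [0, c] is in the domain
  have hlt : ∀ x ∈ Set.Icc (0:ℝ) c, (x : EReal) < a := fun x hx =>
    lt_of_le_of_lt (EReal.coe_le_coe_iff.2 hx.2) hcon
  have hdiff' : ∀ x ∈ Set.Icc (0:ℝ) c, DifferentiableAt ℝ θ x := fun x hx =>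
    hdiff x hx.1 (hlt x hx)
  have hineq' : ∀ x ∈ Set.Icc (0:ℝ) c, deriv θ x ≤ -(θ x) ^ 2 / 2 := fun x hx =>
    hineq x hx.1 (hlt x hx)
  have hintmem : ∀ x ∈ interior (Set.Icc (0:ℝ) c), x ∈ Set.Icc (0:ℝ) c := fun x hx =>
    interior_subset hx
  -- θ is antitone on [0, c]
  have hanti : AntitoneOn θ (Set.Icc 0 c) := by
    apply antitoneOn_of_deriv_nonpos (convex_Icc 0 c)
    · exact fun x hx => (hdiff' x hx).continuousAt.continuousWithinAt
    · exact fun x hx => (hdiff' x (hintmem x hx)).differentiableWithinAt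
    · intro x hx
      have := hineq' x (hintmem x hx)
      nlinarith [sq_nonneg (θ x)]
  -- θ is negative on [0, c]
  have hneg : ∀ x ∈ Set.Icc (0:ℝ) c, θ x < 0 := by
    intro x hx
    have : θ x ≤ θ 0 := hanti (Set.left_mem_Icc.2 hcpos.le) hx hx.1
    rw [h0] at this; linarith
  -- the function x ↦ (θ x)⁻¹ - x/2 is monotone on [0, c]
  have hmono : MonotoneOn (fun x => (θ x)⁻¹ - x / 2) (Set.Icc 0 c) := by
    apply monotoneOn_of_deriv_nonneg (convex_Icc 0 c)
    · intro x hx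
      exact (((hdiff' x hx).inv (hneg x hx).ne).sub
        (differentiableAt_fun_id.div_const 2)).continuousAt.continuousWithinAt
    · intro x hx
      exact (((hdiff' x (hintmem x hx)).inv (hneg x (hintmem x hx)).ne).sub
        (differentiableAt_fun_id.div_const 2)).differentiableWithinAt
    · intro x hx
      have hxm := hintmem x hx
      have hθx := hneg x hxm
      have hdθ := hdiff' x hxm
      have hineqx := hineq' x hxm
      have hder : deriv (fun x => (θ x)⁻¹ - x / 2) x
          = -deriv θ x / (θ x) ^ 2 - 1 / 2 := by
        rw [deriv_fun_sub (f := fun y => (θ y)⁻¹) ((hdθ.inv hθx.ne)) (differentiableAt_fun_id.div_const 2),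
          deriv_fun_inv'' hdθ hθx.ne, deriv_div_const, deriv_id'']
      rw [hder]
      have hsq : 0 < (θ x) ^ 2 := by nlinarith
      rw [sub_nonneg, div_le_div_iff₀ (by norm_num) hsq]
      nlinarith
  -- evaluate monotonicity between 0 and c
  have key : (θ 0)⁻¹ - 0 / 2 ≤ (θ c)⁻¹ - c / 2 :=
    hmono (Set.left_mem_Icc.2 hcpos.le) (Set.right_mem_Icc.2 hcpos.le) hcpos.le
  have hc2 : c / 2 = -θ₀⁻¹ := by
    rw [hc, habs]; field_simp [hθ₀.ne]
  have hθc : θ c < 0 := hneg c (Set.right_mem_Icc.2 hcpos.le)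
  have hinv : (θ c)⁻¹ < 0 := inv_neg''.2 hθc
  rw [h0, hc2] at key
  simp at key
  linarith
end

section
/- Let θ₀ < 0 be a real number and let a ∈ (0, ∞]. Suppose θ : ℝ → ℝ is differentiable at every point of [0, a), satisfies θ(0) = θ₀, and θ′(λ) ≤ −θ(λ)²/2 for every λ ∈ [0, a). Then for every λ ∈ [0, a) with λ < 2/|θ₀| one has 2 + θ₀·λ > 0 and θ(λ) ≤ 2θ₀/(2 + θ₀·λ). (The expansion is dominated from above by the exact Riccati solution, which diverges to −∞ at λ = 2/|θ₀|.) -/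
/-- Comparison form of the focusing step of Penrose's theorem: under the Raychaudhuri
differential inequality `θ' ≤ -θ²/2` on `[0, a)` (with `a ∈ (0, ∞]` modeled as an
extended real) and `θ 0 = θ₀ < 0`, for every `λ ∈ [0, a)` with `λ < 2/|θ₀|` one has
`2 + θ₀·λ > 0` and `θ(λ) ≤ 2θ₀/(2 + θ₀·λ)`: the expansion is dominated from above by
the exact Riccati solution. -/
theorem raychaudhuri_riccati_comparison (θ₀ : ℝ) (hθ₀ : θ₀ < 0) (a : EReal) (ha : 0 < a)
    (θ : ℝ → ℝ)
    (hdiff : ∀ l : ℝ, 0 ≤ l → (l : EReal) < a → DifferentiableAt ℝ θ l)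
    (h0 : θ 0 = θ₀)
    (hineq : ∀ l : ℝ, 0 ≤ l → (l : EReal) < a → deriv θ l ≤ -(θ l) ^ 2 / 2) :
    ∀ l : ℝ, 0 ≤ l → (l : EReal) < a → l < 2 / |θ₀| →
      0 < 2 + θ₀ * l ∧ θ l ≤ 2 * θ₀ / (2 + θ₀ * l) := by
  intro l hl0 hla hl2
  have habs : |θ₀| = -θ₀ := abs_of_neg hθ₀
  have hpos : 0 < 2 + θ₀ * l := by
    rw [habs, lt_div_iff₀ (by linarith)] at hl2
    nlinarith
  refine ⟨hpos, ?_⟩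
  -- every point of `[0, l]` is in the domain
  have hmem : ∀ x ∈ Set.Icc (0:ℝ) l, 0 ≤ x ∧ (x : EReal) < a := fun x hx =>
    ⟨hx.1, lt_of_le_of_lt (EReal.coe_le_coe_iff.mpr hx.2) hla⟩
  have hdiff' : ∀ x ∈ Set.Icc (0:ℝ) l, DifferentiableAt ℝ θ x := fun x hx =>
    hdiff x (hmem x hx).1 (hmem x hx).2
  have hcont : ContinuousOn θ (Set.Icc (0:ℝ) l) := fun x hx =>
    (hdiff' x hx).continuousAt.continuousWithinAt
  have hconv : Convex ℝ (Set.Icc (0:ℝ) l) := convex_Icc 0 l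
  have hint : interior (Set.Icc (0:ℝ) l) ⊆ Set.Icc (0:ℝ) l := interior_subset
  -- θ is nonincreasing, hence θ x ≤ θ₀ < 0 on [0, l]
  have hmono := hconv.image_sub_le_mul_sub_of_deriv_le hcont
    (fun x hx => (hdiff' x (hint hx)).differentiableWithinAt)
    (C := 0)
    (fun x hx => le_trans (hineq x (hmem x (hint hx)).1 (hmem x (hint hx)).2)
      (by nlinarith [sq_nonneg (θ x)]))
  have hθneg : ∀ x ∈ Set.Icc (0:ℝ) l, θ x ≤ θ₀ := by
    intro x hx
    have := hmono 0 (Set.left_mem_Icc.mpr hl0) x hx hx.1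
    simp only [zero_mul] at this
    linarith [this, h0.ge]
  have hθne : ∀ x ∈ Set.Icc (0:ℝ) l, θ x ≠ 0 := fun x hx =>
    ne_of_lt (lt_of_le_of_lt (hθneg x hx) hθ₀)
  -- study g = θ⁻¹ : its derivative is ≥ 1/2
  set g : ℝ → ℝ := fun x => (θ x)⁻¹ with hg
  have hgdiff : ∀ x ∈ Set.Icc (0:ℝ) l, DifferentiableAt ℝ g x := fun x hx =>
    (hdiff' x hx).inv (hθne x hx)
  have hgderiv : ∀ x ∈ Set.Icc (0:ℝ) l, (1:ℝ)/2 ≤ deriv g x := by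
    intro x hx
    rw [hg, show (fun x => (θ x)⁻¹) = θ⁻¹ from rfl, deriv_inv'' (hdiff' x hx) (hθne x hx)]
    have hsq' : 0 < θ x ^ 2 := lt_of_le_of_ne (sq_nonneg _) (Ne.symm (pow_ne_zero 2 (hθne x hx)))
    rw [le_div_iff₀ hsq']
    linarith [hineq x (hmem x hx).1 (hmem x hx).2]
  have hgrow := hconv.mul_sub_le_image_sub_of_le_deriv
    (fun x hx => (hgdiff x hx).continuousAt.continuousWithinAt)
    (fun x hx => (hgdiff x (hint hx)).differentiableWithinAt)
    (fun x hx => hgderiv x (hint hx))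
    0 (Set.left_mem_Icc.mpr hl0) l (Set.right_mem_Icc.mpr hl0) hl0
  -- hgrow : (1/2) * (l - 0) ≤ g l - g 0
  have hlmem : l ∈ Set.Icc (0:ℝ) l := Set.right_mem_Icc.mpr hl0
  have htneg : θ l < 0 := lt_of_le_of_lt (hθneg l hlmem) hθ₀
  have hg0 : g 0 = θ₀⁻¹ := by simp [hg, h0]
  have hinv : θ₀⁻¹ + l / 2 ≤ (θ l)⁻¹ := by
    simp only [hg0, sub_zero] at hgrow
    linarith
  have hrhs : θ₀⁻¹ + l / 2 = (2 + θ₀ * l) / (2 * θ₀) := by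
    field_simp [hθ₀.ne]
  rw [hrhs] at hinv
  -- conclude by inverting the inequality between negative numbers
  rw [le_div_iff₀ hpos]
  have h2θ₀ : 2 * θ₀ < 0 := by linarith
  have h2 : 2 * θ₀ * (θ l)⁻¹ ≤ 2 + θ₀ * l := by
    rw [div_le_iff_of_neg h2θ₀] at hinv
    linarith
  have h3 := mul_le_mul_of_nonpos_right h2 htneg.le
  have h4 : 2 * θ₀ * (θ l)⁻¹ * θ l = 2 * θ₀ := by
    rw [mul_assoc, inv_mul_cancel₀ htneg.ne, mul_one]
  linarith [h3, h4.symm ▸ h3]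
end
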